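/- The set S is attracting for the dynamics: for every token index i ∈ {1,…,n}, dist(z_i^k, S) → 0 as k → ∞. -/

import Mathlib

open scoped RealInnerProductSpace BigOperators Classical
open Filter Metric

noncomputable section

/-- The hardmax attention (argmax) index set `C_i` for a token configuration `z`
(attention matrix `A = I`): the set of indices `j` maximizing `⟪z_i, z_j⟫`. -/
def attn {d n : ℕ} (z : Fin n → EuclideanSpace ℝ (Fin d)) (i : Fin n) : Finset (Fin n) :=
  Finset.univ.filter fun j => (⟪z i, z j⟫ = ⨆ ℓ, ⟪z i, z ℓ⟫)

/-- The pure-attention hardmax transformer dynamics with step-size `α > 0` and `A = I`: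
`z_i^{k+1} = z_i^k + (α/(1+α))·(1/|C_i^k|)·Σ_{j ∈ C_i^k} (z_j^k − z_i^k)`. -/
def IsDyn {d n : ℕ} (α : ℝ) (z : ℕ → Fin n → EuclideanSpace ℝ (Fin d)) : Prop :=
  ∀ k i, z (k + 1) i = z k i +
    (α / (1 + α)) • (((attn (z k) i).card : ℝ)⁻¹ • ∑ j ∈ attn (z k) i, (z k j - z k i))

/-- The limiting set `K = ⋂ₖ co(Z^k)`, the intersection of the convex hulls of the token
configurations over all times. -/
def limitK {d n : ℕ} (z : ℕ → Fin n → EuclideanSpace ℝ (Fin d)) :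
    Set (EuclideanSpace ℝ (Fin d)) :=
  ⋂ k, convexHull ℝ (Set.range (z k))

/-- The cluster set `S = { x ∈ K : max_{v ∈ V} ⟪v − x, x⟫ = 0 }`, where `V` is the set of
extreme points (vertices) of `K`; `max … = 0` is phrased as: `0` is the greatest element of
the set of values `⟪v − x, x⟫`, `v ∈ V`. -/
def clusterSet {d : ℕ} (K : Set (EuclideanSpace ℝ (Fin d))) :
    Set (EuclideanSpace ℝ (Fin d)) :=
  {x ∈ K | IsGreatest ((fun v => ⟪v - x, x⟫) '' (Set.extremePoints ℝ K)) 0}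

private lemma attn_nonempty {d n : ℕ} (hn : 0 < n) (z : Fin n → EuclideanSpace ℝ (Fin d))
    (i : Fin n) : (attn z i).Nonempty := by
  haveI : Nonempty (Fin n) := ⟨⟨0, hn⟩⟩
  obtain ⟨j, hj⟩ := exists_eq_ciSup_of_finite (f := fun ℓ => ⟪z i, z ℓ⟫)
  exact ⟨j, Finset.mem_filter.2 ⟨Finset.mem_univ _, hj⟩⟩

private lemma inner_le_csup {d n : ℕ} (z : Fin n → EuclideanSpace ℝ (Fin d)) (i j : Fin n) :
    ⟪z i, z j⟫ ≤ ⨆ ℓ, ⟪z i, z ℓ⟫ :=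
  le_ciSup (f := fun ℓ => ⟪z i, z ℓ⟫) (Set.Finite.bddAbove (Set.finite_range _)) j

/-- The cluster set `S` is attracting: every token converges to `S` in distance. -/
theorem clusterSet_attracting {d n : ℕ} (hd : 0 < d) (hn : 0 < n) (α : ℝ) (hα : 0 < α)
    (z : ℕ → Fin n → EuclideanSpace ℝ (Fin d)) (hdyn : IsDyn α z)
    (hdist : ∀ i j : Fin n, i ≠ j → z 0 i ≠ z 0 j) (hnz : ∀ i, z 0 i ≠ 0) :
    ∀ i : Fin n,
      Tendsto (fun k => infDist (z k i) (clusterSet (limitK z))) atTop (nhds 0) := by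
  set c : ℝ := α / (1 + α) with hc_def
  have hc0 : 0 < c := div_pos hα (by linarith)
  have hc1 : c < 1 := (div_lt_one (by linarith)).2 (by linarith)
  set m : ℕ → Fin n → EuclideanSpace ℝ (Fin d) := fun k i =>
    ((attn (z k) i).card : ℝ)⁻¹ • ∑ j ∈ attn (z k) i, z k j with hm_def
  have hcard : ∀ (k : ℕ) (i : Fin n), (0 : ℝ) < (attn (z k) i).card := fun k i => by
    exact_mod_cast Finset.card_pos.2 (attn_nonempty hn (z k) i)
  have hstep : ∀ (k : ℕ) (i : Fin n), z (k + 1) i = z k i + c • (m k i - z k i) := by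
    intro k i
    rw [hdyn k i]
    congr 2
    have h1 : ∑ j ∈ attn (z k) i, (z k j - z k i)
        = (∑ j ∈ attn (z k) i, z k j) - ((attn (z k) i).card : ℝ) • z k i := by
      rw [Finset.sum_sub_distrib, Finset.sum_const, Nat.cast_smul_eq_nsmul]
    rw [h1, smul_sub, inv_smul_smul₀ (ne_of_gt (hcard k i))]
  have hz_mem : ∀ (k : ℕ) (i : Fin n), z k i ∈ convexHull ℝ (Set.range (z k)) :=
    fun k i => subset_convexHull ℝ _ (Set.mem_range_self i)
  have hm_mem : ∀ (k : ℕ) (i : Fin n), m k i ∈ convexHull ℝ (Set.range (z k)) := by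
    intro k i
    have h1 : m k i = ∑ j ∈ attn (z k) i, ((attn (z k) i).card : ℝ)⁻¹ • z k j :=
      Finset.smul_sum
    rw [h1]
    refine (convex_convexHull ℝ _).sum_mem (fun j _ => by positivity) ?_
      (fun j _ => subset_convexHull ℝ _ (Set.mem_range_self j))
    rw [Finset.sum_const, nsmul_eq_mul]
    exact mul_inv_cancel₀ (ne_of_gt (hcard k i))
  have hnext : ∀ (k : ℕ) (i : Fin n), z (k + 1) i ∈ convexHull ℝ (Set.range (z k)) := by
    intro k i
    rw [hstep k i]
    have h1 : z k i + c • (m k i - z k i) = (1 - c) • z k i + c • m k i := by module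
    rw [h1]
    exact (convex_convexHull ℝ _) (hz_mem k i) (hm_mem k i) (by linarith) (le_of_lt hc0)
      (by ring)
  have hhull : ∀ k : ℕ,
      convexHull ℝ (Set.range (z (k + 1))) ⊆ convexHull ℝ (Set.range (z k)) := by
    intro k
    refine convexHull_min ?_ (convex_convexHull ℝ _)
    rintro _ ⟨j, rfl⟩
    exact hnext k j
  have hnested : ∀ {k l : ℕ}, k ≤ l →
      convexHull ℝ (Set.range (z l)) ⊆ convexHull ℝ (Set.range (z k)) := by
    intro k l hkl
    induction hkl with
    | refl => exact subset_rfl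
    | step h ih => exact (hhull _).trans ih
  have hBcomp : IsCompact (convexHull ℝ (Set.range (z 0))) :=
    Set.Finite.isCompact_convexHull (𝕜 := ℝ) (Set.finite_range (z 0))
  have hInB : ∀ (k : ℕ) (i : Fin n), z k i ∈ convexHull ℝ (Set.range (z 0)) :=
    fun k i => hnested (Nat.zero_le k) (hz_mem k i)
  obtain ⟨R, hR⟩ := hBcomp.isBounded.exists_norm_le
  have hMge : ∀ (k : ℕ) (i : Fin n), ⟪z k i, z k i⟫ ≤ ⨆ ℓ, ⟪z k i, z k ℓ⟫ :=
    fun k i => inner_le_csup (z k) i i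
  have hinner_m : ∀ (k : ℕ) (i : Fin n), ⟪z k i, m k i⟫ = ⨆ ℓ, ⟪z k i, z k ℓ⟫ := by
    intro k i
    have hcne : ((attn (z k) i).card : ℝ) ≠ 0 := ne_of_gt (hcard k i)
    have hsum : ∑ j ∈ attn (z k) i, ⟪z k i, z k j⟫
        = ((attn (z k) i).card : ℝ) * (⨆ ℓ, ⟪z k i, z k ℓ⟫) := by
      have hcongr : ∀ j ∈ attn (z k) i, ⟪z k i, z k j⟫ = (⨆ ℓ, ⟪z k i, z k ℓ⟫) :=
        fun j hj => (Finset.mem_filter.1 hj).2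
      rw [Finset.sum_congr rfl hcongr, Finset.sum_const, nsmul_eq_mul]
    rw [hm_def]
    rw [real_inner_smul_right, inner_sum, hsum, inv_mul_cancel_left₀ hcne]
  have hgrow : ∀ (k : ℕ) (i : Fin n),
      ⟪z k i, z k i⟫ + 2 * c * ((⨆ ℓ, ⟪z k i, z k ℓ⟫) - ⟪z k i, z k i⟫)
        ≤ ⟪z (k + 1) i, z (k + 1) i⟫ := by
    intro k i
    rw [hstep k i, real_inner_add_add_self]
    have h1 : ⟪z k i, c • (m k i - z k i)⟫
        = c * ((⨆ ℓ, ⟪z k i, z k ℓ⟫) - ⟪z k i, z k i⟫) := by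
      rw [real_inner_smul_right, inner_sub_right, hinner_m k i]
    have h2 : (0 : ℝ) ≤ ⟪c • (m k i - z k i), c • (m k i - z k i)⟫ := real_inner_self_nonneg
    linarith
  intro i
  have ha_mono : Monotone (fun k => ⟪z k i, z k i⟫) := by
    apply monotone_nat_of_le_succ
    intro k
    have h1 := hgrow k i
    have h2 : (0 : ℝ) ≤ 2 * c * ((⨆ ℓ, ⟪z k i, z k ℓ⟫) - ⟪z k i, z k i⟫) :=
      mul_nonneg (by linarith) (sub_nonneg.2 (hMge k i))
    linarith
  have ha_bdd : ∀ k, ⟪z k i, z k i⟫ ≤ R ^ 2 := by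
    intro k
    have h := hR _ (hInB k i)
    have h2 : ⟪z k i, z k i⟫ = ‖z k i‖ ^ 2 := real_inner_self_eq_norm_sq _
    rw [h2]
    exact pow_le_pow_left₀ (norm_nonneg _) h 2
  have hL : Tendsto (fun k => ⟪z k i, z k i⟫) atTop (nhds (⨆ k, ⟪z k i, z k i⟫)) :=
    tendsto_atTop_ciSup ha_mono ⟨R ^ 2, by rintro _ ⟨k, rfl⟩; exact ha_bdd k⟩
  have hdiff : Tendsto (fun k => ⟪z (k + 1) i, z (k + 1) i⟫ - ⟪z k i, z k i⟫) atTop (nhds 0) := by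
    have h1 : Tendsto (fun k => ⟪z (k + 1) i, z (k + 1) i⟫) atTop
        (nhds (⨆ k, ⟪z k i, z k i⟫)) := hL.comp (tendsto_add_atTop_nat 1)
    simpa using h1.sub hL
  have hgap : Tendsto (fun k => (⨆ ℓ, ⟪z k i, z k ℓ⟫) - ⟪z k i, z k i⟫) atTop (nhds 0) := by
    apply tendsto_of_tendsto_of_tendsto_of_le_of_le (g := fun _ => (0 : ℝ))
      (h := fun k => (⟪z (k + 1) i, z (k + 1) i⟫ - ⟪z k i, z k i⟫) / (2 * c))
      tendsto_const_nhds (by simpa using hdiff.div_const (2 * c))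
    · intro k
      exact sub_nonneg.2 (hMge k i)
    · intro k
      show (⨆ ℓ, ⟪z k i, z k ℓ⟫) - ⟪z k i, z k i⟫
        ≤ (⟪z (k + 1) i, z (k + 1) i⟫ - ⟪z k i, z k i⟫) / (2 * c)
      rw [le_div_iff₀ (by linarith)]
      have := hgrow k i
      linarith
  have hkey : ∀ x : EuclideanSpace ℝ (Fin d), (∃ σ : ℕ → ℕ, StrictMono σ ∧
      Tendsto (fun t => z (σ t) i) atTop (nhds x)) → x ∈ clusterSet (limitK z) := by
    rintro x ⟨σ, hσ, hx⟩
    have hσle : ∀ t, t ≤ σ t := fun t => hσ.le_apply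
    have hxK : x ∈ limitK z := by
      rw [limitK, Set.mem_iInter]
      intro k
      have hcl : IsClosed (convexHull ℝ (Set.range (z k))) :=
        (Set.Finite.isCompact_convexHull (𝕜 := ℝ) (Set.finite_range _)).isClosed
      apply hcl.mem_of_tendsto hx
      filter_upwards [eventually_ge_atTop k] with t ht
      exact hnested (ht.trans (hσle t)) (hz_mem _ i)
    have hle : ∀ y ∈ limitK z, ⟪x, y⟫ ≤ ⟪x, x⟫ := by
      intro y hy
      have h1 : ∀ k : ℕ, ⟪z k i, y⟫ ≤ ⨆ ℓ, ⟪z k i, z k ℓ⟫ := by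
        intro k
        have hy' : y ∈ convexHull ℝ (Set.range (z k)) := by
          rw [limitK, Set.mem_iInter] at hy; exact hy k
        have hsub : convexHull ℝ (Set.range (z k))
            ⊆ {w : EuclideanSpace ℝ (Fin d) | ⟪z k i, w⟫ ≤ ⨆ ℓ, ⟪z k i, z k ℓ⟫} := by
          refine convexHull_min ?_ ?_
          · rintro _ ⟨ℓ, rfl⟩
            exact inner_le_csup (z k) i ℓ
          · exact convex_halfSpace_le
              ⟨fun u v => inner_add_right _ _ _, fun r u => real_inner_smul_right _ _ _⟩ _
        exact hsub hy'
      have hf : Tendsto (fun t => ⟪z (σ t) i, y⟫ - ⟪z (σ t) i, z (σ t) i⟫) atTop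
          (nhds (⟪x, y⟫ - ⟪x, x⟫)) :=
        (hx.inner tendsto_const_nhds).sub (hx.inner hx)
      have hg : Tendsto (fun t => (⨆ ℓ, ⟪z (σ t) i, z (σ t) ℓ⟫) - ⟪z (σ t) i, z (σ t) i⟫)
          atTop (nhds 0) := hgap.comp hσ.tendsto_atTop
      have h2 := le_of_tendsto_of_tendsto' hf hg
        (fun t => sub_le_sub_right (h1 (σ t)) _)
      linarith
    have hKcomp : IsCompact (limitK z) := by
      apply IsCompact.of_isClosed_subset hBcomp
      · exact isClosed_iInter fun k => (Set.Finite.isCompact_convexHull (𝕜 := ℝ) (Set.finite_range _)).isClosed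
      · exact Set.iInter_subset _ 0
    refine ⟨hxK, ?_, ?_⟩
    · -- 0 is attained at some extreme point
      set F : Set (EuclideanSpace ℝ (Fin d)) := {y ∈ limitK z |
        ∀ w ∈ limitK z, (innerSL ℝ x) w ≤ (innerSL ℝ x) y} with hF
      have hexp : IsExposed ℝ (limitK z) F := fun _ => ⟨innerSL ℝ x, rfl⟩
      have hxF : x ∈ F := ⟨hxK, fun w hw => by simpa using hle w hw⟩
      have hFcomp : IsCompact F := hexp.isCompact hKcomp
      obtain ⟨v, hv⟩ := hFcomp.extremePoints_nonempty ⟨x, hxF⟩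
      have hvK : v ∈ Set.extremePoints ℝ (limitK z) :=
        hexp.isExtreme.extremePoints_subset_extremePoints hv
      refine ⟨v, hvK, ?_⟩
      show ⟪v - x, x⟫ = 0
      have h1 : ⟪x, x⟫ ≤ ⟪x, v⟫ := by simpa using hv.1.2 x hxK
      have h2 : ⟪x, v⟫ ≤ ⟪x, x⟫ := hle v hv.1.1
      rw [inner_sub_left]
      have h3 := real_inner_comm v x
      linarith
    · rintro r ⟨v, hv, rfl⟩
      show ⟪v - x, x⟫ ≤ 0
      have hvx : ⟪v, x⟫ ≤ ⟪x, x⟫ := by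
        rw [real_inner_comm]; exact hle v hv.1
      rw [inner_sub_left]
      linarith
  by_contra hcon
  rw [Metric.tendsto_atTop] at hcon
  push_neg at hcon
  obtain ⟨ε, hε, hfreq⟩ := hcon
  have hfr : ∃ᶠ k in atTop, ε ≤ infDist (z k i) (clusterSet (limitK z)) := by
    rw [Filter.frequently_atTop]
    intro N
    obtain ⟨nn, h1, h2⟩ := hfreq N
    exact ⟨nn, h1, by rwa [Real.dist_0_eq_abs, abs_of_nonneg infDist_nonneg] at h2⟩
  obtain ⟨φ, hφ, hφP⟩ := extraction_of_frequently_atTop hfr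
  obtain ⟨x, hxB, ψ, hψ, hconv⟩ :=
    hBcomp.tendsto_subseq (x := fun t => z (φ t) i) (fun t => hInB (φ t) i)
  have hconv' : Tendsto (fun t => z (φ (ψ t)) i) atTop (nhds x) := hconv
  have hxS : x ∈ clusterSet (limitK z) := hkey x ⟨φ ∘ ψ, hφ.comp hψ, hconv'⟩
  have htd : Tendsto (fun t => infDist (z (φ (ψ t)) i) (clusterSet (limitK z))) atTop
      (nhds (infDist x (clusterSet (limitK z)))) :=
    ((continuous_infDist_pt (clusterSet (limitK z))).tendsto x).comp hconv'
  rw [infDist_zero_of_mem hxS] at htd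
  have : ε ≤ 0 := ge_of_tendsto htd (Eventually.of_forall fun t => hφP (ψ t))
  linarith

end
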